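/- Vanishing of the Sylvester alternating counts: Let n ≥ 1 be an integer and N a nonnegative integer, and write c_{n,k}(N) for the number of elements of Q_{n,k} of weight N. Then ∑_{k=0}^∞ (−1)^k c_{n,k}(N) = 0; the sum over k has only finitely many nonzero terms. -/

import Mathlib

/-- `Q n k` is the set of partitions `λ` (multisets of positive integers) such that
no part of `λ` equals `2k+1` and `λ` has exactly `n - k` parts strictly greater
than `k`; it is empty when `k > n`. -/
def Q (n k : ℕ) : Set (Multiset ℕ) :=
  {lam | (∀ x ∈ lam, 0 < x ∧ x ≠ 2 * k + 1) ∧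
    (lam.filter (fun x => k < x)).card + k = n}

/-- The weight of an element of `Q n k`: `k(3k+1)/2 + |λ|`. -/
def wt (k : ℕ) (lam : Multiset ℕ) : ℕ := k * (3 * k + 1) / 2 + lam.sum

namespace Sylv

/-- multisets of positive integers with sum `M` and exactly `m` parts `> k`. -/
def Fset (k m M : ℕ) : Set (Multiset ℕ) :=
  {l | (∀ x ∈ l, 0 < x) ∧ l.sum = M ∧ (l.filter (fun x => k < x)).card = m}

/-- additionally avoiding the part `v`. -/
def Avset (k m M : ℕ) : Set (Multiset ℕ) :=
  {l | (∀ x ∈ l, 0 < x ∧ x ≠ 2 * k + 1) ∧ l.sum = M ∧ (l.filter (fun x => k < x)).card = m}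

/-- multisets of parts in `[1,k]` with sum `M`. -/
def Pset (k M : ℕ) : Set (Multiset ℕ) :=
  {l | (∀ x ∈ l, 0 < x ∧ x ≤ k) ∧ l.sum = M}

lemma finite_master (M : ℕ) : {l : Multiset ℕ | (∀ x ∈ l, 0 < x) ∧ l.sum = M}.Finite := by
  classical
  set big : Multiset ℕ := M • (Multiset.range (M + 1)) with hbig
  apply Set.Finite.subset (big.powerset.toFinset : Finset (Multiset ℕ)).finite_toSet
  intro l hl
  obtain ⟨hpos, hsum⟩ := hl
  simp only [Finset.coe_sort_coe, Finset.mem_coe, Multiset.mem_toFinset,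
    Multiset.mem_powerset]
  rw [Multiset.le_iff_count]
  intro x
  rcases Nat.eq_zero_or_pos (l.count x) with h0 | hc
  · simp [h0]
  have hxl : x ∈ l := by rwa [← Multiset.count_pos]
  have hx1 : 1 ≤ x := hpos x hxl
  have hxle : x ≤ M := by
    calc x ≤ l.sum := Multiset.le_sum_of_mem hxl
    _ = M := hsum
  have hcount : l.count x ≤ M := by
    have hrep : Multiset.replicate (l.count x) x ≤ l :=
      Multiset.le_count_iff_replicate_le.1 le_rfl
    obtain ⟨u, hu⟩ := Multiset.le_iff_exists_add.1 hrep
    have h1 : l.count x * x ≤ l.sum := by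
      have hs : l.sum = (Multiset.replicate (l.count x) x + u).sum := by rw [← hu]
      rw [hs, Multiset.sum_add, Multiset.sum_replicate, smul_eq_mul]
      exact Nat.le_add_right _ _
    have h2 : l.count x * 1 ≤ l.count x * x := Nat.mul_le_mul_left _ hx1
    omega
  have hmem : x ∈ Multiset.range (M + 1) := by
    rw [Multiset.mem_range]; omega
  have : big.count x = M := by
    rw [hbig, Multiset.count_nsmul,
      Multiset.count_eq_one_of_mem (Multiset.nodup_range _) hmem, mul_one]
  omega

lemma Fset_finite (k m M : ℕ) : (Fset k m M).Finite :=
  (finite_master M).subset (fun l hl => ⟨hl.1, hl.2.1⟩)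

lemma Avset_finite (k m M : ℕ) : (Avset k m M).Finite :=
  (finite_master M).subset (fun l hl => ⟨fun x hx => (hl.1 x hx).1, hl.2.1⟩)

lemma Pset_finite (k M : ℕ) : (Pset k M).Finite :=
  (finite_master M).subset (fun l hl => ⟨fun x hx => (hl.1 x hx).1, hl.2⟩)

/-- The image of `S` under inserting a copy of `v` equals the elements of `T` containing `v`. -/
lemma image_cons_eq (v : ℕ) (S T : Set (Multiset ℕ))
    (h : ∀ l : Multiset ℕ, l ∈ S ↔ (v ::ₘ l) ∈ T) :
    ((v ::ₘ ·) '' S) = T ∩ {l | v ∈ l} := by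
  ext l'
  constructor
  · rintro ⟨l, hl, rfl⟩
    exact ⟨(h l).1 hl, Multiset.mem_cons_self v l⟩
  · rintro ⟨hT, hv⟩
    refine ⟨l'.erase v, ?_, Multiset.cons_erase hv⟩
    rw [h, Multiset.cons_erase hv]
    exact hT

lemma cons_inj (v : ℕ) : Function.Injective (v ::ₘ · : Multiset ℕ → Multiset ℕ) :=
  fun a b hab => by simpa using hab

lemma ncard_split_contains (T : Set (Multiset ℕ)) (hT : T.Finite) (v : ℕ) :
    T.ncard = (T ∩ {l | v ∈ l}).ncard + (T ∩ {l | v ∉ l}).ncard := by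
  rw [← Set.ncard_union_eq ?_ (hT.subset Set.inter_subset_left)
      (hT.subset Set.inter_subset_left)]
  · congr 1
    ext l
    by_cases hv : v ∈ l <;> simp [hv]
  · refine Set.disjoint_left.2 ?_
    rintro l ⟨-, hv⟩ ⟨-, hnv⟩
    exact hnv hv

/-- Master recursion lemma: if membership in `S` corresponds to membership of `v ::ₘ ·` in `T`,
then `|T| = |T ∩ {v ∉ ·}| + |S|`. -/
lemma count_rec (v : ℕ) (S T : Set (Multiset ℕ)) (hT : T.Finite)
    (h : ∀ l : Multiset ℕ, l ∈ S ↔ (v ::ₘ l) ∈ T) :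
    T.ncard = S.ncard + (T ∩ {l | v ∉ l}).ncard := by
  rw [ncard_split_contains T hT v]
  congr 1
  rw [← image_cons_eq v S T h, Set.ncard_image_of_injective _ (cons_inj v)]

end Sylv

namespace Sylv

/-- Count versions. -/
noncomputable def Fc (k m M : ℕ) : ℕ := (Fset k m M).ncard
noncomputable def Avc (k m M : ℕ) : ℕ := (Avset k m M).ncard
noncomputable def Pc (k M : ℕ) : ℕ := (Pset k M).ncard
noncomputable def F0c (k m M : ℕ) : ℕ := (Fset k m M ∩ {l | (k+1) ∉ l}).ncard

lemma mem_Fset_cons_iff (k m M v : ℕ) (hv : 0 < v) (hkv : k < v) (l : Multiset ℕ) :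
    l ∈ Fset k m M ↔ (v ::ₘ l) ∈ Fset k (m+1) (M + v) := by
  constructor
  · rintro ⟨h1, h2, h3⟩
    refine ⟨?_, ?_, ?_⟩
    · intro x hx
      rcases Multiset.mem_cons.1 hx with rfl | hx
      exacts [hv, h1 x hx]
    · rw [Multiset.sum_cons]; omega
    · rw [Multiset.filter_cons_of_pos _ hkv, Multiset.card_cons, h3]
  · rintro ⟨h1, h2, h3⟩
    rw [Multiset.sum_cons] at h2
    rw [Multiset.filter_cons_of_pos _ hkv, Multiset.card_cons] at h3
    exact ⟨fun x hx => h1 x (Multiset.mem_cons_of_mem hx), by omega, Nat.succ_injective h3⟩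

lemma mem_Fset_cons_small_iff (k m M v : ℕ) (hv : 0 < v) (hkv : ¬ (k < v)) (l : Multiset ℕ) :
    l ∈ Fset k m M ↔ (v ::ₘ l) ∈ Fset k m (M + v) := by
  constructor
  · rintro ⟨h1, h2, h3⟩
    refine ⟨?_, ?_, ?_⟩
    · intro x hx
      rcases Multiset.mem_cons.1 hx with rfl | hx
      exacts [hv, h1 x hx]
    · rw [Multiset.sum_cons]; omega
    · rw [Multiset.filter_cons_of_neg _ hkv]; exact h3
  · rintro ⟨h1, h2, h3⟩
    rw [Multiset.sum_cons] at h2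
    rw [Multiset.filter_cons_of_neg _ hkv] at h3
    exact ⟨fun x hx => h1 x (Multiset.mem_cons_of_mem hx), by omega, h3⟩

/-- Remove a part `k+1` (which counts towards the `m` parts `> k`). -/
lemma rec1 (k m M : ℕ) :
    Fc k (m+1) (M + (k+1)) = Fc k m M + F0c k (m+1) (M + (k+1)) := by
  exact count_rec (k+1) _ _ (Fset_finite _ _ _)
    (mem_Fset_cons_iff k m M (k+1) (Nat.succ_pos k) (Nat.lt_succ_self k))

/-- At level `k+1`, a part `k+1` is small. -/
lemma rec2 (k m M : ℕ) :
    Fc (k+1) m (M + (k+1)) = Fc (k+1) m M + F0c k m (M + (k+1)) := by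
  have h := count_rec (k+1) (Fset (k+1) m M) (Fset (k+1) m (M + (k+1)))
    (Fset_finite _ _ _)
    (mem_Fset_cons_small_iff (k+1) m M (k+1) (Nat.succ_pos k) (by omega))
  unfold Fc F0c
  rw [h]
  congr 1
  apply congrArg
  ext l
  simp only [Fset, Set.mem_inter_iff, Set.mem_setOf_eq]
  constructor
  · rintro ⟨⟨h1, h2, h3⟩, h4⟩
    refine ⟨⟨h1, h2, ?_⟩, h4⟩
    rw [← h3]
    congr 1
    apply Multiset.filter_congr
    intro x hx
    have : x ≠ k + 1 := fun hxx => h4 (hxx ▸ hx)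
    omega
  · rintro ⟨⟨h1, h2, h3⟩, h4⟩
    refine ⟨⟨h1, h2, ?_⟩, h4⟩
    rw [← h3]
    congr 1
    apply Multiset.filter_congr
    intro x hx
    have : x ≠ k + 1 := fun hxx => h4 (hxx ▸ hx)
    omega

/-- Remove a part `2k+1`. -/
lemma recAv (k m M : ℕ) :
    Fc k (m+1) (M + (2*k+1)) = Fc k m M + Avc k (m+1) (M + (2*k+1)) := by
  have h := count_rec (2*k+1) (Fset k m M) (Fset k (m+1) (M + (2*k+1)))
    (Fset_finite _ _ _)
    (mem_Fset_cons_iff k m M (2*k+1) (by omega) (by omega))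
  unfold Fc Avc
  rw [h]
  congr 1
  apply congrArg
  ext l
  simp only [Fset, Avset, Set.mem_inter_iff, Set.mem_setOf_eq]
  constructor
  · rintro ⟨⟨h1, h2, h3⟩, h4⟩
    exact ⟨fun x hx => ⟨h1 x hx, fun hxx => h4 (hxx ▸ hx)⟩, h2, h3⟩
  · rintro ⟨h1, h2, h3⟩
    refine ⟨⟨fun x hx => (h1 x hx).1, h2, h3⟩, fun hmem => (h1 _ hmem).2 rfl⟩

/-- Partitions with parts `≤ k+1`: remove a part `k+1`. -/
lemma recP (k M : ℕ) :
    Pc (k+1) (M + (k+1)) = Pc (k+1) M + Pc k (M + (k+1)) := by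
  have h := count_rec (k+1) (Pset (k+1) M) (Pset (k+1) (M + (k+1)))
    (Pset_finite _ _)
    (by
      intro l
      simp only [Pset, Set.mem_setOf_eq, Multiset.forall_mem_cons, Multiset.sum_cons]
      constructor
      · rintro ⟨h1, h2⟩
        exact ⟨⟨⟨Nat.succ_pos k, le_rfl⟩, h1⟩, by omega⟩
      · rintro ⟨h1, h2⟩
        exact ⟨h1.2, by omega⟩)
  unfold Pc
  rw [h]
  congr 1
  congr 1
  ext l
  simp only [Pset, Set.mem_inter_iff, Set.mem_setOf_eq]
  constructor
  · rintro ⟨⟨h1, h2⟩, h4⟩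
    refine ⟨fun x hx => ⟨(h1 x hx).1, ?_⟩, h2⟩
    have := (h1 x hx).2
    have : x ≠ k + 1 := fun hxx => h4 (hxx ▸ hx)
    omega
  · rintro ⟨h1, h2⟩
    refine ⟨⟨fun x hx => ⟨(h1 x hx).1, by have := (h1 x hx).2; omega⟩, h2⟩, ?_⟩
    intro hmem
    have := (h1 _ hmem).2
    omega

lemma Fc_zero_eq_Pc (k M : ℕ) : Fc k 0 M = Pc k M := by
  unfold Fc Pc
  congr 1
  ext l
  simp only [Fset, Pset, Set.mem_setOf_eq, Multiset.card_eq_zero]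
  constructor
  · rintro ⟨h1, h2, h3⟩
    refine ⟨fun x hx => ⟨h1 x hx, ?_⟩, h2⟩
    by_contra hgt
    have : x ∈ Multiset.filter (fun x => k < x) l := Multiset.mem_filter.2 ⟨hx, by omega⟩
    rw [h3] at this
    simp at this
  · rintro ⟨h1, h2⟩
    refine ⟨fun x hx => (h1 x hx).1, h2, ?_⟩
    rw [Multiset.filter_eq_nil]
    intro x hx
    have := (h1 x hx).2
    omega

lemma Avc_zero_eq_Pc (k M : ℕ) : Avc k 0 M = Pc k M := by
  unfold Avc Pc
  congr 1
  ext l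
  simp only [Avset, Pset, Set.mem_setOf_eq, Multiset.card_eq_zero]
  constructor
  · rintro ⟨h1, h2, h3⟩
    refine ⟨fun x hx => ⟨(h1 x hx).1, ?_⟩, h2⟩
    by_contra hgt
    have : x ∈ Multiset.filter (fun x => k < x) l := Multiset.mem_filter.2 ⟨hx, by omega⟩
    rw [h3] at this
    simp at this
  · rintro ⟨h1, h2⟩
    refine ⟨fun x hx => ⟨(h1 x hx).1, by have := (h1 x hx).2; omega⟩, h2, ?_⟩
    rw [Multiset.filter_eq_nil]
    intro x hx
    have := (h1 x hx).2
    omega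

lemma Fc_eq_zero (k m M : ℕ) (h : M < m * (k+1)) : Fc k m M = 0 := by
  unfold Fc
  convert Set.ncard_empty (Multiset ℕ)
  rw [Set.eq_empty_iff_forall_notMem]
  rintro l ⟨h1, h2, h3⟩
  have hle : Multiset.filter (fun x => k < x) l ≤ l := Multiset.filter_le _ _
  obtain ⟨u, hu⟩ := Multiset.le_iff_exists_add.1 hle
  have hsumf : (Multiset.filter (fun x => k < x) l).sum ≤ M := by
    have : l.sum = (Multiset.filter (fun x => k < x) l).sum + u.sum := by
      conv_lhs => rw [hu]
      rw [Multiset.sum_add]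
    omega
  have hlower : m * (k+1) ≤ (Multiset.filter (fun x => k < x) l).sum := by
    have := Multiset.card_nsmul_le_sum (s := Multiset.filter (fun x => k < x) l)
      (a := k+1) (fun x hx => by
        have := Multiset.of_mem_filter hx
        omega)
    rw [h3] at this
    simpa [smul_eq_mul, mul_comm] using this
  omega

lemma Pc_zero_level (M : ℕ) : Pc 0 M = if M = 0 then 1 else 0 := by
  unfold Pc
  split_ifs with h
  · subst h
    convert Set.ncard_singleton (0 : Multiset ℕ)
    ext l
    simp only [Pset, Set.mem_setOf_eq, Set.mem_singleton_iff]
    constructor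
    · rintro ⟨h1, h2⟩
      rw [Multiset.eq_zero_iff_forall_notMem]
      intro x hx
      have := h1 x hx
      omega
    · rintro rfl
      simp
  · convert Set.ncard_empty (Multiset ℕ)
    rw [Set.eq_empty_iff_forall_notMem]
    rintro l ⟨h1, h2⟩
    have : l = 0 := by
      rw [Multiset.eq_zero_iff_forall_notMem]
      intro x hx
      have := h1 x hx
      omega
    rw [this] at h2
    simp at h2
    omega

end Sylv

namespace Sylv

open PowerSeries

lemma F0c_le (k m M : ℕ) : F0c k m M ≤ Fc k m M :=
  Set.ncard_le_ncard Set.inter_subset_left (Fset_finite k m M)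

lemma ncard_inter_contains_eq_zero {T : Set (Multiset ℕ)} {M v : ℕ}
    (hT : ∀ l ∈ T, l.sum = M) (hMv : M < v) : (T ∩ {l | v ∈ l}).ncard = 0 := by
  convert Set.ncard_empty (Multiset ℕ)
  rw [Set.eq_empty_iff_forall_notMem]
  rintro l ⟨hl, hvl⟩
  have h1 : v ≤ l.sum := Multiset.le_sum_of_mem hvl
  have h2 := hT l hl
  omega

lemma Fset_inter_shift (k m M : ℕ) :
    Fset (k+1) m M ∩ {l | (k+1) ∉ l} = Fset k m M ∩ {l | (k+1) ∉ l} := by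
  ext l
  simp only [Fset, Set.mem_inter_iff, Set.mem_setOf_eq]
  constructor
  · rintro ⟨⟨h1, h2, h3⟩, h4⟩
    refine ⟨⟨h1, h2, ?_⟩, h4⟩
    rw [← h3]
    congr 1
    apply Multiset.filter_congr
    intro x hx
    have : x ≠ k + 1 := fun hxx => h4 (hxx ▸ hx)
    omega
  · rintro ⟨⟨h1, h2, h3⟩, h4⟩
    refine ⟨⟨h1, h2, ?_⟩, h4⟩
    rw [← h3]
    congr 1
    apply Multiset.filter_congr
    intro x hx
    have : x ≠ k + 1 := fun hxx => h4 (hxx ▸ hx)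
    omega

lemma Avset_inter_eq (k m M : ℕ) :
    Fset k m M ∩ {l | (2*k+1) ∉ l} = Avset k m M := by
  ext l
  simp only [Fset, Avset, Set.mem_inter_iff, Set.mem_setOf_eq]
  constructor
  · rintro ⟨⟨h1, h2, h3⟩, h4⟩
    exact ⟨fun x hx => ⟨h1 x hx, fun hxx => h4 (hxx ▸ hx)⟩, h2, h3⟩
  · rintro ⟨h1, h2, h3⟩
    refine ⟨⟨fun x hx => (h1 x hx).1, h2, h3⟩, fun hmem => (h1 _ hmem).2 rfl⟩

lemma Pset_inter_eq (k M : ℕ) :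
    Pset (k+1) M ∩ {l | (k+1) ∉ l} = Pset k M := by
  ext l
  simp only [Pset, Set.mem_inter_iff, Set.mem_setOf_eq]
  constructor
  · rintro ⟨⟨h1, h2⟩, h4⟩
    refine ⟨fun x hx => ⟨(h1 x hx).1, ?_⟩, h2⟩
    have hle := (h1 x hx).2
    have : x ≠ k + 1 := fun hxx => h4 (hxx ▸ hx)
    omega
  · rintro ⟨h1, h2⟩
    refine ⟨⟨fun x hx => ⟨(h1 x hx).1, by have := (h1 x hx).2; omega⟩, h2⟩, ?_⟩
    intro hmem
    have := (h1 _ hmem).2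
    omega

lemma rec1' (k m M : ℕ) :
    Fc k (m+1) M = F0c k (m+1) M + (if k+1 ≤ M then Fc k m (M - (k+1)) else 0) := by
  split_ifs with h
  · have h2 := rec1 k m (M - (k+1))
    rw [Nat.sub_add_cancel h] at h2
    omega
  · have hz := ncard_inter_contains_eq_zero (T := Fset k (m+1) M) (v := k+1)
      (fun l hl => hl.2.1) (by omega)
    unfold Fc F0c
    rw [ncard_split_contains _ (Fset_finite _ _ _) (k+1), hz]
    omega

lemma rec2' (k m M : ℕ) :
    Fc (k+1) m M = F0c k m M + (if k+1 ≤ M then Fc (k+1) m (M - (k+1)) else 0) := by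
  split_ifs with h
  · have h2 := rec2 k m (M - (k+1))
    rw [Nat.sub_add_cancel h] at h2
    omega
  · have hz := ncard_inter_contains_eq_zero (T := Fset (k+1) m M) (v := k+1)
      (fun l hl => hl.2.1) (by omega)
    unfold Fc F0c
    rw [ncard_split_contains _ (Fset_finite (k+1) m M) (k+1), hz, Fset_inter_shift]
    omega

lemma recAv' (k m M : ℕ) :
    Fc k (m+1) M = Avc k (m+1) M + (if 2*k+1 ≤ M then Fc k m (M - (2*k+1)) else 0) := by
  split_ifs with h
  · have h2 := recAv k m (M - (2*k+1))
    rw [Nat.sub_add_cancel h] at h2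
    omega
  · have hz := ncard_inter_contains_eq_zero (T := Fset k (m+1) M) (v := 2*k+1)
      (fun l hl => hl.2.1) (by omega)
    unfold Fc Avc
    rw [ncard_split_contains _ (Fset_finite _ _ _) (2*k+1), hz, Avset_inter_eq]
    omega

lemma recP' (k M : ℕ) :
    Pc (k+1) M = Pc k M + (if k+1 ≤ M then Pc (k+1) (M - (k+1)) else 0) := by
  split_ifs with h
  · have h2 := recP k (M - (k+1))
    rw [Nat.sub_add_cancel h] at h2
    omega
  · have hz := ncard_inter_contains_eq_zero (T := Pset (k+1) M) (v := k+1)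
      (fun l hl => hl.2) (by omega)
    unfold Pc
    rw [ncard_split_contains _ (Pset_finite _ _) (k+1), hz, Pset_inter_eq]
    omega

/-! ### Power series -/

noncomputable def Pser (k : ℕ) : PowerSeries ℤ := PowerSeries.mk (fun M => (Pc k M : ℤ))
noncomputable def Fser (k m : ℕ) : PowerSeries ℤ := PowerSeries.mk (fun M => (Fc k m M : ℤ))
noncomputable def Avser (k m : ℕ) : PowerSeries ℤ := PowerSeries.mk (fun M => (Avc k m M : ℤ))
noncomputable def F0ser (k m : ℕ) : PowerSeries ℤ := PowerSeries.mk (fun M => (F0c k m M : ℤ))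

lemma ser1 (k m : ℕ) :
    Fser k (m+1) = F0ser k (m+1) + (X : ℤ⟦X⟧)^(k+1) * Fser k m := by
  ext M
  simp only [Fser, F0ser, map_add, coeff_mk, coeff_X_pow_mul']
  rw [rec1' k m M]
  push_cast
  split_ifs <;> simp [coeff_mk]

lemma ser2 (k m : ℕ) :
    Fser (k+1) m = F0ser k m + (X : ℤ⟦X⟧)^(k+1) * Fser (k+1) m := by
  ext M
  simp only [Fser, F0ser, map_add, coeff_mk, coeff_X_pow_mul']
  rw [rec2' k m M]
  push_cast
  split_ifs <;> simp [coeff_mk]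

lemma serAv (k m : ℕ) :
    Fser k (m+1) = Avser k (m+1) + (X : ℤ⟦X⟧)^(2*k+1) * Fser k m := by
  ext M
  simp only [Fser, Avser, map_add, coeff_mk, coeff_X_pow_mul']
  rw [recAv' k m M]
  push_cast
  split_ifs <;> simp [coeff_mk]

lemma serP (k : ℕ) :
    Pser (k+1) = Pser k + (X : ℤ⟦X⟧)^(k+1) * Pser (k+1) := by
  ext M
  simp only [Pser, map_add, coeff_mk, coeff_X_pow_mul']
  rw [recP' k M]
  push_cast
  split_ifs <;> simp [coeff_mk]

lemma Pser_rel (k : ℕ) : (1 - (X : ℤ⟦X⟧)^(k+1)) * Pser (k+1) = Pser k := by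
  have h := serP k
  linear_combination h

lemma Pser_zero : Pser 0 = 1 := by
  ext M
  simp only [Pser, coeff_mk, Pc_zero_level, PowerSeries.coeff_one]
  split_ifs <;> simp

lemma Fser_zero_m (k : ℕ) : Fser k 0 = Pser k := by
  ext M
  simp only [Fser, Pser, coeff_mk, Fc_zero_eq_Pc]

lemma Avser_zero_m (k : ℕ) : Avser k 0 = Pser k := by
  ext M
  simp only [Avser, Pser, coeff_mk, Avc_zero_eq_Pc]

/-- key combined relation -/
lemma star (k m : ℕ) :
    Fser k (m+1) = (1 - (X : ℤ⟦X⟧)^(k+1)) * Fser (k+1) (m+1)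
      + (X : ℤ⟦X⟧)^(k+1) * Fser k m := by
  have h1 := ser1 k m
  have h2 := ser2 k (m+1)
  linear_combination h1 - h2

end Sylv

namespace Sylv
open PowerSeries

lemma coeff_Fser_zero (k m M : ℕ) (h : M < m*(k+1)) :
    (PowerSeries.coeff (R := ℤ) M) (Fser k m) = 0 := by
  simp only [Fser, coeff_mk]
  rw [Fc_eq_zero k m M h]
  simp

lemma Fser_closed : ∀ m k, Fser k m = (X : ℤ⟦X⟧)^(m*(k+1)) * Pser k * Pser m := by
  intro m
  induction m with
  | zero =>
    intro k
    simp only [Nat.zero_mul, pow_zero, one_mul]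
    rw [Fser_zero_m, Pser_zero, mul_one]
  | succ m ih =>
    intro k
    set W : ℕ → ℤ⟦X⟧ := fun j => (X : ℤ⟦X⟧)^((m+1)*(j+1)) * Pser j * Pser (m+1) with hW
    have hrel : ∀ j, Fser j (m+1) - W j
        = (1 - (X : ℤ⟦X⟧)^(j+1)) * (Fser (j+1) (m+1) - W (j+1)) := by
      intro j
      have hstar := star j m
      have hih := ih j
      have hP1 := Pser_rel j
      have hP2 := Pser_rel m
      simp only [hW]
      linear_combination hstar + (X : ℤ⟦X⟧)^(j+1) * hih
        + (X : ℤ⟦X⟧)^((m+1)*(j+2)) * Pser (m+1) * hP1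
        - (X : ℤ⟦X⟧)^((m+1)*(j+1)) * Pser j * hP2
    have hvanish : ∀ M j, (PowerSeries.coeff (R := ℤ) M) (Fser j (m+1) - W j) = 0 := by
      intro M
      induction M using Nat.strong_induction_on with
      | _ M IH =>
        have hstep : ∀ j, (PowerSeries.coeff (R := ℤ) M) (Fser j (m+1) - W j)
            = (PowerSeries.coeff (R := ℤ) M) (Fser (j+1) (m+1) - W (j+1)) := by
          intro j
          rw [hrel j, sub_mul, one_mul, map_sub, coeff_X_pow_mul']
          split_ifs with hle
          · rw [IH (M - (j+1)) (by omega) (j+1)]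
            ring
          · ring
        have hiter : ∀ t j, (PowerSeries.coeff (R := ℤ) M) (Fser j (m+1) - W j)
            = (PowerSeries.coeff (R := ℤ) M) (Fser (j+t) (m+1) - W (j+t)) := by
          intro t
          induction t with
          | zero => intro j; rfl
          | succ t iht =>
            intro j
            rw [hstep j, iht (j+1), show j+1+t = j+(t+1) from by omega]
        intro j
        rw [hiter (M+1) j]
        have hbig : M < (m+1) * ((j+(M+1))+1) := by
          calc M < M + 2 := by omega
          _ = 1 * (M + 2) := by ring
          _ ≤ (m+1) * (M+2) := Nat.mul_le_mul_right _ (by omega)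
          _ ≤ (m+1) * (j+(M+1)+1) := Nat.mul_le_mul_left _ (by omega)
        rw [map_sub, coeff_Fser_zero _ _ _ hbig]
        simp only [hW]
        rw [mul_assoc, coeff_X_pow_mul']
        rw [if_neg (by omega)]
        ring
    have : Fser k (m+1) - W k = 0 := by
      ext M
      rw [map_zero]
      exact hvanish M k
    have h2 := sub_eq_zero.mp this
    rw [h2]

end Sylv

namespace Sylv
open PowerSeries

def sk (k : ℕ) : ℕ := k * (3 * k + 1) / 2

lemma sk_succ (k : ℕ) : sk (k+1) = sk k + (3*k+2) := by
  have hdvd : 2 ∣ k * (3 * k + 1) := by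
    rcases Nat.even_or_odd k with h | h
    · exact (h.mul_right _).two_dvd
    · have h2 : Even (3 * k + 1) := by
        obtain ⟨a, ha⟩ := h
        exact ⟨3*a + 2, by omega⟩
      exact (h2.mul_left k).two_dvd
  obtain ⟨c, hc⟩ := hdvd
  have h1 : sk k = c := by unfold sk; omega
  have h2 : (k+1) * (3 * (k+1) + 1) = 2 * (c + (3*k+2)) := by
    have : (k+1) * (3*(k+1)+1) = k * (3*k+1) + 2*(3*k+2) := by ring
    omega
  have h3 : sk (k+1) = c + (3*k+2) := by unfold sk; omega
  omega

/-- exponent `e_k = s_k + (n-k)(k+1)`. -/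
def bexp (n k : ℕ) : ℕ := sk k + (n - k) * (k + 1)

lemma bexp_succ (n k : ℕ) (h : k < n) : bexp n (k+1) = bexp n k + (n + k) := by
  obtain ⟨e, rfl⟩ : ∃ e, n = k + e + 1 := ⟨n - k - 1, by omega⟩
  unfold bexp
  rw [sk_succ]
  have h1 : k + e + 1 - (k+1) = e := by omega
  have h2 : k + e + 1 - k = e + 1 := by omega
  rw [h1, h2]
  ring

noncomputable def CSser (n k : ℕ) : ℤ⟦X⟧ :=
  (X : ℤ⟦X⟧)^(bexp n k) * (Pser k * Pser (n-k)) * (1 - X^k + X^n)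

noncomputable def Zser (n k : ℕ) : ℤ⟦X⟧ :=
  if k = 0 ∨ n < k then 0 else (X : ℤ⟦X⟧)^(bexp n k) * Pser (k-1) * Pser (n-k)

lemma key_alg (n k : ℕ) (hn : 1 ≤ n) (hk : k ≤ n) :
    (1 - (X : ℤ⟦X⟧)^n) * CSser n k = Zser n k + Zser n (k+1) := by
  rcases Nat.eq_zero_or_pos k with rfl | hkpos
  · -- k = 0
    obtain ⟨p, rfl⟩ : ∃ p, n = p + 1 := ⟨n - 1, by omega⟩
    have hz0 : Zser (p+1) 0 = 0 := by simp [Zser]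
    have hz1 : Zser (p+1) 1 = (X : ℤ⟦X⟧)^(bexp (p+1) 1) * Pser 0 * Pser p := by
      simp [Zser]
    have hb : bexp (p+1) 1 = bexp (p+1) 0 + (p+1) := by
      simpa using bexp_succ (p+1) 0 (by omega)
    have hcs : CSser (p+1) 0 = (X:ℤ⟦X⟧)^(bexp (p+1) 0) * Pser (p+1) * X^(p+1) := by
      rw [CSser, Pser_zero, pow_zero]
      have h0 : (p+1) - 0 = p+1 := rfl
      rw [h0]
      ring
    rw [hz0, zero_add, hz1, hb, hcs, Pser_zero, pow_add, ← Pser_rel p]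
    ring
  · rcases Nat.lt_or_ge k n with hkn | hkn
    · -- 0 < k < n
      obtain ⟨d, hd⟩ : ∃ d, n - k = d + 1 := ⟨n - k - 1, by omega⟩
      obtain ⟨j, hj⟩ : ∃ j, k = j + 1 := ⟨k - 1, by omega⟩
      have hz1 : Zser n k = (X : ℤ⟦X⟧)^(bexp n k) * Pser (k-1) * Pser (n-k) := by
        rw [Zser, if_neg (by omega)]
      have hz2 : Zser n (k+1) = (X : ℤ⟦X⟧)^(bexp n (k+1)) * Pser k * Pser (n-(k+1)) := by
        rw [Zser, if_neg (by omega)]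
        congr 2
      have hb := bexp_succ n k hkn
      have hd2 : n - (k+1) = d := by omega
      have hPk : Pser (k-1) = (1 - (X:ℤ⟦X⟧)^k) * Pser k := by
        rw [hj]
        simp only [Nat.add_sub_cancel]
        rw [← Pser_rel j]
      have hPd : Pser d = (1 - (X:ℤ⟦X⟧)^(d+1)) * Pser (d+1) := (Pser_rel d).symm
      rw [hz1, hz2, hb, hd2, hd, hPk, hPd, CSser, hd]
      have hx : (X : ℤ⟦X⟧)^(bexp n k + (n + k)) = X^(bexp n k) * X^n * X^k := by
        rw [← pow_add, ← pow_add]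
        congr 1
        omega
      have hx2 : (X : ℤ⟦X⟧)^n = X^k * X^(d+1) := by
        rw [← pow_add]
        congr 1
        omega
      rw [hx, hx2]
      ring
    · -- k = n
      have hkn' : k = n := by omega
      subst hkn'
      have hz1 : Zser k k = (X : ℤ⟦X⟧)^(bexp k k) * Pser (k-1) * Pser 0 := by
        rw [Zser, if_neg (by omega), Nat.sub_self]
      have hz2 : Zser k (k+1) = 0 := by
        rw [Zser, if_pos (by omega)]
      have hPk : Pser (k-1) = (1 - (X:ℤ⟦X⟧)^k) * Pser k := by
        obtain ⟨j, rfl⟩ : ∃ j, k = j + 1 := ⟨k - 1, by omega⟩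
        simp only [Nat.add_sub_cancel]
        rw [← Pser_rel j]
      rw [hz1, hz2, add_zero, hPk, CSser, Pser_zero]
      have h0 : k - k = 0 := by omega
      rw [h0, Pser_zero]
      ring

lemma telescope (g : ℕ → ℤ⟦X⟧) (n : ℕ) :
    ∑ k ∈ Finset.range (n+1), (-1 : ℤ⟦X⟧)^k * (g k + g (k+1))
      = g 0 + (-1 : ℤ⟦X⟧)^n * g (n+1) := by
  induction n with
  | zero => simp
  | succ n ih =>
    rw [Finset.sum_range_succ, ih]
    ring

lemma main_alg (n : ℕ) (hn : 1 ≤ n) :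
    ∑ k ∈ Finset.range (n+1), (-1 : ℤ⟦X⟧)^k * CSser n k = 0 := by
  have hne : (1 - (X : ℤ⟦X⟧)^n) ≠ 0 := by
    intro hcon
    have h := congrArg (PowerSeries.constantCoeff (R := ℤ)) hcon
    rw [map_sub, map_one, map_pow, PowerSeries.constantCoeff_X,
      zero_pow (by omega : n ≠ 0), map_zero] at h
    norm_num at h
  have hmul : (1 - (X : ℤ⟦X⟧)^n) * (∑ k ∈ Finset.range (n+1), (-1 : ℤ⟦X⟧)^k * CSser n k) = 0 := by
    rw [Finset.mul_sum]
    have : ∀ k ∈ Finset.range (n+1),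
        (1 - (X : ℤ⟦X⟧)^n) * ((-1 : ℤ⟦X⟧)^k * CSser n k)
          = (-1 : ℤ⟦X⟧)^k * (Zser n k + Zser n (k+1)) := by
      intro k hk
      rw [Finset.mem_range] at hk
      rw [← key_alg n k hn (by omega)]
      ring
    rw [Finset.sum_congr rfl this, telescope]
    have hz0 : Zser n 0 = 0 := by simp [Zser]
    have hz1 : Zser n (n+1) = 0 := by rw [Zser, if_pos (by omega)]
    rw [hz0, hz1]
    ring
  rcases mul_eq_zero.mp hmul with h | h
  · exact absurd h hne
  · exact h

end Sylv

namespace Sylv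
open PowerSeries

lemma Avser_eq (k d : ℕ) :
    Avser k (d+1) = Fser k (d+1) - (X:ℤ⟦X⟧)^(2*k+1) * Fser k d := by
  linear_combination -(serAv k d)

lemma CS_eq (n k : ℕ) (hk : k ≤ n) :
    CSser n k = (X:ℤ⟦X⟧)^(sk k) * Avser k (n-k) := by
  rcases Nat.lt_or_ge k n with hkn | hkn
  · obtain ⟨d, rfl⟩ : ∃ d, n = k + (d+1) := ⟨n - k - 1, by omega⟩
    have hd : k + (d+1) - k = d + 1 := by omega
    have hb : bexp (k + (d+1)) k = sk k + (d+1)*(k+1) := by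
      unfold bexp
      rw [hd]
    rw [hd, Avser_eq, Fser_closed (d+1) k, Fser_closed d k, ← Pser_rel d,
      CSser, hd, hb]
    have hx1 : (X:ℤ⟦X⟧)^(sk k + (d+1)*(k+1)) = X^(sk k) * X^((d+1)*(k+1)) := pow_add X _ _
    have hx2 : (X:ℤ⟦X⟧)^(k + (d+1)) = X^k * X^(d+1) := pow_add X _ _
    have hx3 : (X:ℤ⟦X⟧)^((d+1)*(k+1)) = X^(d*(k+1)) * X^(k+1) := by
      rw [← pow_add]
      congr 1
      ring
    rw [hx1, hx2, hx3]
    ring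
  · have hk' : k = n := by omega
    subst hk'
    rw [Nat.sub_self, Avser_zero_m, CSser, Nat.sub_self, Pser_zero]
    have hb : bexp k k = sk k := by
      unfold bexp
      rw [Nat.sub_self]
      simp
    rw [hb]
    ring

lemma set_eq_avset (n k N : ℕ) (hk : k ≤ n) (hN : sk k ≤ N) :
    {lam | lam ∈ Q n k ∧ wt k lam = N} = Avset k (n-k) (N - sk k) := by
  ext lam
  simp only [Set.mem_setOf_eq, Q, wt, Avset]
  constructor
  · rintro ⟨⟨h1, h2⟩, h3⟩
    refine ⟨h1, ?_, ?_⟩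
    · have : sk k = k * (3*k+1)/2 := rfl
      omega
    · omega
  · rintro ⟨h1, h2, h3⟩
    refine ⟨⟨h1, by omega⟩, ?_⟩
    have : sk k = k * (3*k+1)/2 := rfl
    omega

lemma count_eq_coeff (n k N : ℕ) (hk : k ≤ n) :
    ((Nat.card {lam | lam ∈ Q n k ∧ wt k lam = N} : ℤ))
      = (PowerSeries.coeff (R := ℤ) N) (CSser n k) := by
  rw [CS_eq n k hk, coeff_X_pow_mul']
  split_ifs with h
  · rw [Nat.card_coe_set_eq, set_eq_avset n k N hk h]
    simp only [Avser, coeff_mk]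
    rfl
  · have hempty : {lam | lam ∈ Q n k ∧ wt k lam = N} = ∅ := by
      rw [Set.eq_empty_iff_forall_notMem]
      rintro lam ⟨-, h3⟩
      have : sk k = k * (3*k+1)/2 := rfl
      rw [wt] at h3
      omega
    rw [hempty]
    simp

end Sylv

open Sylv PowerSeries in
/-- Vanishing of the Sylvester alternating counts. -/
theorem sylvester_vanishing (n N : ℕ) (hn : 1 ≤ n) :
    ∑' k : ℕ, ((-1 : ℤ) ^ k * Nat.card {lam | lam ∈ Q n k ∧ wt k lam = N}) = 0 := by
  have hzero : ∀ k, n < k → ((-1 : ℤ) ^ k *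
      Nat.card {lam | lam ∈ Q n k ∧ wt k lam = N}) = 0 := by
    intro k hk
    have hempty : {lam | lam ∈ Q n k ∧ wt k lam = N} = ∅ := by
      rw [Set.eq_empty_iff_forall_notMem]
      rintro lam ⟨⟨-, h2⟩, -⟩
      omega
    rw [hempty]
    simp
  rw [tsum_eq_sum (s := Finset.range (n+1))
    (fun k hk => hzero k (by simpa using hk))]
  have hterm : ∀ k ∈ Finset.range (n+1),
      ((-1 : ℤ) ^ k * Nat.card {lam | lam ∈ Q n k ∧ wt k lam = N})
        = (PowerSeries.coeff (R := ℤ) N) ((-1 : ℤ⟦X⟧)^k * CSser n k) := by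
    intro k hk
    rw [Finset.mem_range] at hk
    have hC : ((-1 : ℤ⟦X⟧))^k = PowerSeries.C ((-1 : ℤ)^k) := by
      rw [map_pow, map_neg, map_one]
    rw [hC, PowerSeries.coeff_C_mul, ← count_eq_coeff n k N (by omega)]
  rw [Finset.sum_congr rfl hterm, ← map_sum, main_alg n hn, map_zero]
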